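/- Let E be a real inner product space, K ⊆ E a convex set, λ, G > 0, and ℓ : E → ℝ differentiable with gradient ∇ℓ such that for all μ, μ₀ ∈ K, ℓ(μ) − ℓ(μ₀) ≤ ⟨∇ℓ(μ), μ − μ₀⟩ − λ‖μ − μ₀‖², and ‖∇ℓ(μ)‖ ≤ G on K. Let μ* ∈ K minimise ℓ over K, let K ≥ 1, set η′_j := 1/(λ j) for 1 ≤ j ≤ K, start from x₀ ∈ K and define x_{j+1} as a metric projection onto K of x_j − η′_{j+1}∇ℓ(x_j). Then the Polyak average ν := (1/K)Σ_{j=1}^{K} x_j satisfies ℓ(ν) − ℓ(μ*) ≤ G²(1 + log K)/(λ K). -/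

import Mathlib

open RealInnerProductSpace Finset

lemma proj_contract' {E : Type*} [NormedAddCommGroup E] [InnerProductSpace ℝ E]
    {K : Set E} (hK : Convex ℝ K) {z q : E} (hq : q ∈ K)
    (hm : ∀ y ∈ K, ‖z - q‖ ≤ ‖z - y‖) {y : E} (hy : y ∈ K) : ‖q - y‖ ≤ ‖z - y‖ := by
  haveI : Nonempty K := ⟨⟨q, hq⟩⟩
  have hobt : ∀ w ∈ K, ⟪z - q, w - q⟫ ≤ 0 := by
    rw [← norm_eq_iInf_iff_real_inner_le_zero hK hq]
    refine le_antisymm (le_ciInf fun w => hm w w.2) ?_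
    exact ciInf_le ⟨0, fun _ ⟨w, hw⟩ => hw ▸ norm_nonneg _⟩ (⟨q, hq⟩ : K)
  have h1 : ⟪z - q, y - q⟫ ≤ 0 := hobt y hy
  have h2 : ‖z - y‖ ^ 2 = ‖z - q‖ ^ 2 - 2 * ⟪z - q, y - q⟫ + ‖y - q‖ ^ 2 := by
    have := norm_sub_sq_real (z - q) (y - q)
    simpa [sub_sub_sub_cancel_right] using this
  have h3 : ‖q - y‖ ^ 2 ≤ ‖z - y‖ ^ 2 := by
    rw [h2, ← norm_neg (q - y)]
    simp only [neg_sub]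
    nlinarith [sq_nonneg ‖z - q‖]
  nlinarith [norm_nonneg (q - y), norm_nonneg (z - y)]

lemma step_algebra' (lam G c r r' d : ℝ) (hlam : 0 < lam) (hc : 1 ≤ c)
    (hrec : r' ≤ r - 2*(1/(lam*c))*(d + lam*r) + (1/(lam*c))^2*G^2) :
    d ≤ lam/2*((c-2)*r - c*r') + G^2/(2*(lam*c)) := by
  have hc0 : (0:ℝ) < c := lt_of_lt_of_le one_pos hc
  have hlc : 0 < lam*c := mul_pos hlam hc0
  have h2 : (lam*c)^2 * r' ≤ (lam*c)^2 * r - 2*(lam*c)*(d+lam*r) + G^2 := by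
    have e1 : (lam*c)^2 * (r - 2*(1/(lam*c))*(d + lam*r) + (1/(lam*c))^2*G^2)
        = (lam*c)^2*r - 2*(lam*c)*(d+lam*r) + G^2 := by
      field_simp
    calc (lam*c)^2 * r' ≤ (lam*c)^2 * (r - 2*(1/(lam*c))*(d + lam*r) + (1/(lam*c))^2*G^2) :=
          mul_le_mul_of_nonneg_left hrec (by positivity)
      _ = _ := e1
  rw [← sub_nonneg]
  have hgoal : lam/2*((c-2)*r - c*r') + G^2/(2*(lam*c)) - d =
      (((lam*c)^2*r - 2*(lam*c)*(d+lam*r) + G^2) - (lam*c)^2*r') / (2*(lam*c)) := by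
    field_simp
    ring
  rw [hgoal]
  apply div_nonneg _ (by positivity)
  linarith

lemma telescope_bound' (N : ℕ) (hN : 1 ≤ N) (r : ℕ → ℝ) (hr : ∀ j, 0 ≤ r j) :
    ∑ t ∈ range N, (((t:ℝ)-1) * r t - ((t:ℝ)+1) * r (t+1)) ≤ - r N := by
  have h1 : ∑ t ∈ range N, ((((t:ℝ)-1) * r t) - (((t+1:ℕ):ℝ)-1) * r (t+1)) =
      ((0:ℝ)-1) * r 0 - (((N:ℕ):ℝ)-1) * r N := by
    have := Finset.sum_range_sub' (f := fun t => ((t:ℝ)-1) * r t) N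
    simpa using this
  have h2 : r N ≤ ∑ t ∈ range N, r (t+1) := by
    have hmem : N - 1 ∈ range N := by simp; omega
    have h : r (N-1+1) ≤ ∑ t ∈ range N, r (t+1) :=
      Finset.single_le_sum (f := fun t => r (t+1)) (fun i _ => hr _) hmem
    have hEq : N - 1 + 1 = N := by omega
    rwa [hEq] at h
  have h3 : ∑ t ∈ range N, (((t:ℝ)-1) * r t - ((t:ℝ)+1) * r (t+1)) =
      (∑ t ∈ range N, ((((t:ℝ)-1) * r t) - (((t+1:ℕ):ℝ)-1) * r (t+1)))
      - ∑ t ∈ range N, r (t+1) := by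
    rw [← Finset.sum_sub_distrib]
    apply Finset.sum_congr rfl
    intro t _
    push_cast
    ring
  rw [h3, h1]
  have hN1 : (1:ℝ) ≤ (N:ℝ) := by exact_mod_cast hN
  nlinarith [hr 0, hr N]

lemma harmonic_sum_bound' (N : ℕ) : ∑ t ∈ range N, 1/((t:ℝ)+1) ≤ 1 + Real.log N := by
  have h1 : ((harmonic N : ℚ) : ℝ) = ∑ t ∈ range N, 1/((t:ℝ)+1) := by
    rw [harmonic]
    push_cast
    simp [one_div]
  have := harmonic_le_one_add_log N
  linarith [h1 ▸ this]

theorem construct_guarantee_harmonic {E : Type*} [NormedAddCommGroup E] [InnerProductSpace ℝ E]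
    [CompleteSpace E]
    (K : Set E) (hK : Convex ℝ K) (lam G : ℝ) (hlam : 0 < lam) (hG : 0 < G)
    (ℓ : E → ℝ) (g : E → E) (hdiff : ∀ x : E, HasGradientAt ℓ (g x) x)
    (hsc : ∀ μ ∈ K, ∀ μ₀ ∈ K, ℓ μ - ℓ μ₀ ≤ ⟪g μ, μ - μ₀⟫ - lam * ‖μ - μ₀‖ ^ 2)
    (hGb : ∀ μ ∈ K, ‖g μ‖ ≤ G)
    (μstar : E) (hμstarK : μstar ∈ K) (hmin : ∀ y ∈ K, ℓ μstar ≤ ℓ y)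
    (N : ℕ) (hN : 1 ≤ N) (η : ℕ → ℝ) (hη : ∀ j, 1 ≤ j → j ≤ N → η j = 1 / (lam * j))
    (x : ℕ → E) (hx0 : x 0 ∈ K)
    (hiter : ∀ j < N, x (j + 1) ∈ K ∧
      ∀ y ∈ K, ‖x j - η (j + 1) • g (x j) - x (j + 1)‖ ≤ ‖x j - η (j + 1) • g (x j) - y‖)
    (ν : E) (hν : ν = (N : ℝ)⁻¹ • ∑ j ∈ Icc 1 N, x j) :
    ℓ ν - ℓ μstar ≤ G ^ 2 * (1 + Real.log N) / (lam * N) := by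
  have hNpos : (0:ℝ) < N := by exact_mod_cast hN
  have hxK : ∀ j, j ≤ N → x j ∈ K := by
    intro j hj
    cases j with
    | zero => exact hx0
    | succ n => exact (hiter n (by omega)).1
  -- per-step inequality
  have hstep : ∀ t, t < N → ℓ (x t) - ℓ μstar ≤
      lam/2*((((t:ℝ)+1)-2) * ‖x t - μstar‖^2 - ((t:ℝ)+1) * ‖x (t+1) - μstar‖^2)
      + G^2/(2*(lam*((t:ℝ)+1))) := by
    intro t ht
    obtain ⟨hx1K, hproj⟩ := hiter t ht
    have hc : (1:ℝ) ≤ (t:ℝ)+1 := by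
      have := Nat.cast_nonneg (α := ℝ) t; linarith
    have hηv : η (t+1) = 1/(lam*((t:ℝ)+1)) := by
      rw [hη (t+1) (by omega) (by omega)]
      push_cast
      ring
    have hηpos : 0 < η (t+1) := by
      rw [hηv]; positivity
    have hcon : ‖x (t+1) - μstar‖ ≤ ‖x t - η (t+1) • g (x t) - μstar‖ :=
      proj_contract' hK hx1K hproj hμstarK
    have hsq : ‖x (t+1) - μstar‖^2 ≤ ‖x t - η (t+1) • g (x t) - μstar‖^2 := by
      nlinarith [norm_nonneg (x (t+1) - μstar), norm_nonneg (x t - η (t+1) • g (x t) - μstar)]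
    have hexp : ‖x t - η (t+1) • g (x t) - μstar‖^2
        = ‖x t - μstar‖^2 - 2*(η (t+1))*⟪g (x t), x t - μstar⟫
          + (η (t+1))^2 * ‖g (x t)‖^2 := by
      have harr : x t - η (t+1) • g (x t) - μstar = (x t - μstar) - η (t+1) • g (x t) :=
        sub_right_comm _ _ _
      rw [harr, norm_sub_sq_real, real_inner_smul_right, real_inner_comm, norm_smul, mul_pow,
        Real.norm_eq_abs, sq_abs]
      ring
    have hscv := hsc (x t) (hxK t (le_of_lt ht)) μstar hμstarK
    have hgb := hGb (x t) (hxK t (le_of_lt ht))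
    have h1 : (ℓ (x t) - ℓ μstar) + lam*‖x t - μstar‖^2 ≤ ⟪g (x t), x t - μstar⟫ := by
      linarith
    have h2 : ‖g (x t)‖^2 ≤ G^2 := by nlinarith [norm_nonneg (g (x t))]
    have hrec : ‖x (t+1) - μstar‖^2 ≤ ‖x t - μstar‖^2
        - 2*(1/(lam*((t:ℝ)+1)))*((ℓ (x t) - ℓ μstar) + lam*‖x t - μstar‖^2)
        + (1/(lam*((t:ℝ)+1)))^2*G^2 := by
      rw [← hηv]
      have h3 : 2*(η (t+1))*((ℓ (x t) - ℓ μstar) + lam*‖x t - μstar‖^2)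
          ≤ 2*(η (t+1))*⟪g (x t), x t - μstar⟫ :=
        mul_le_mul_of_nonneg_left h1 (by positivity)
      have h4 : (η (t+1))^2*‖g (x t)‖^2 ≤ (η (t+1))^2*G^2 :=
        mul_le_mul_of_nonneg_left h2 (sq_nonneg _)
      linarith [hsq, hexp]
    exact step_algebra' lam G ((t:ℝ)+1) _ _ _ hlam hc hrec
  -- sum over steps
  have hrn : ∀ j : ℕ, (0:ℝ) ≤ ‖x j - μstar‖^2 := fun j => sq_nonneg _
  have htel := telescope_bound' N hN (fun j => ‖x j - μstar‖^2) hrn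
  have hH := harmonic_sum_bound' N
  have hsum1 : ∑ t ∈ range N, (ℓ (x t) - ℓ μstar)
      ≤ lam/2 * (- ‖x N - μstar‖^2) + G^2/(2*lam) * ∑ t ∈ range N, 1/((t:ℝ)+1) := by
    have hb : ∑ t ∈ range N, (ℓ (x t) - ℓ μstar)
        ≤ ∑ t ∈ range N, (lam/2*((((t:ℝ)+1)-2) * ‖x t - μstar‖^2
            - ((t:ℝ)+1) * ‖x (t+1) - μstar‖^2) + G^2/(2*(lam*((t:ℝ)+1)))) :=
      Finset.sum_le_sum (fun t h => hstep t (mem_range.mp h))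
    have hsplit : ∑ t ∈ range N, (lam/2*((((t:ℝ)+1)-2) * ‖x t - μstar‖^2
            - ((t:ℝ)+1) * ‖x (t+1) - μstar‖^2) + G^2/(2*(lam*((t:ℝ)+1))))
        = lam/2 * (∑ t ∈ range N, (((t:ℝ)-1) * ‖x t - μstar‖^2
            - ((t:ℝ)+1) * ‖x (t+1) - μstar‖^2))
          + G^2/(2*lam) * ∑ t ∈ range N, 1/((t:ℝ)+1) := by
      rw [Finset.sum_add_distrib, Finset.mul_sum, Finset.mul_sum]
      congr 1
      · apply Finset.sum_congr rfl; intro t _; ring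
      · apply Finset.sum_congr rfl; intro t _
        have h0 : ((t:ℝ)+1) ≠ 0 := by positivity
        field_simp
    have hmul : lam/2 * (∑ t ∈ range N, (((t:ℝ)-1) * ‖x t - μstar‖^2
            - ((t:ℝ)+1) * ‖x (t+1) - μstar‖^2)) ≤ lam/2 * (- ‖x N - μstar‖^2) :=
      mul_le_mul_of_nonneg_left htel (by positivity)
    calc ∑ t ∈ range N, (ℓ (x t) - ℓ μstar) ≤ _ := hb
      _ = _ := hsplit
      _ ≤ _ := by linarith
  -- bound at x N
  have hδN : ℓ (x N) - ℓ μstar ≤ G*‖x N - μstar‖ - lam*‖x N - μstar‖^2 := by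
    have h := hsc (x N) (hxK N le_rfl) μstar hμstarK
    have h2 : ⟪g (x N), x N - μstar⟫ ≤ G*‖x N - μstar‖ :=
      (real_inner_le_norm _ _).trans
        (mul_le_mul_of_nonneg_right (hGb _ (hxK N le_rfl)) (norm_nonneg _))
    linarith
  have hy : G*‖x N - μstar‖ - lam*‖x N - μstar‖^2 - lam/2*‖x N - μstar‖^2 ≤ G^2/(6*lam) := by
    rw [← sub_nonneg,
      show G^2/(6*lam) - (G*‖x N - μstar‖ - lam*‖x N - μstar‖^2 - lam/2*‖x N - μstar‖^2)
        = (G - 3*lam*‖x N - μstar‖)^2/(6*lam) by field_simp; ring]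
    positivity
  have hδ0 : 0 ≤ ℓ (x 0) - ℓ μstar := sub_nonneg.mpr (hmin _ hx0)
  -- total sum over Icc 1 N
  have hfold : ∑ j ∈ Icc 1 N, (ℓ (x j) - ℓ μstar)
      = (∑ t ∈ range N, (ℓ (x t) - ℓ μstar)) - (ℓ (x 0) - ℓ μstar) + (ℓ (x N) - ℓ μstar) := by
    have e1 : ∑ j ∈ Icc 1 N, (ℓ (x j) - ℓ μstar)
        = ∑ t ∈ range N, (ℓ (x (t+1)) - ℓ μstar) := by
      rw [← Finset.Ico_add_one_right_eq_Icc, Finset.sum_Ico_eq_sum_range]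
      apply Finset.sum_congr rfl
      intro t _
      rw [add_comm]
    rw [e1]
    have e2 := Finset.sum_range_succ' (fun t => ℓ (x t) - ℓ μstar) N
    have e3 := Finset.sum_range_succ (fun t => ℓ (x t) - ℓ μstar) N
    linarith [e2, e3]
  have hS : ∑ j ∈ Icc 1 N, (ℓ (x j) - ℓ μstar)
      ≤ G^2/(2*lam)*(1+Real.log N) + G^2/(6*lam) := by
    have hHmul : G^2/(2*lam) * ∑ t ∈ range N, 1/((t:ℝ)+1)
        ≤ G^2/(2*lam) * (1+Real.log N) :=
      mul_le_mul_of_nonneg_left hH (by positivity)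
    rw [hfold]
    linarith
  -- ν ∈ K
  have hνK : ν ∈ K := by
    rw [hν, Finset.smul_sum]
    refine hK.sum_mem (fun i _ => by positivity) ?_ (fun i hi => hxK i (mem_Icc.mp hi).2)
    rw [Finset.sum_const, Nat.card_Icc]
    simp only [Nat.add_sub_cancel, nsmul_eq_mul]
    field_simp
  -- Jensen
  have hjensen : (N:ℝ) * (ℓ ν - ℓ μstar) ≤ ∑ j ∈ Icc 1 N, (ℓ (x j) - ℓ μstar) := by
    have h1 : ∀ j ∈ Icc 1 N, ℓ ν - ℓ (x j) ≤ ⟪g ν, ν - x j⟫ := by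
      intro j hj
      have h := hsc ν hνK (x j) (hxK j (mem_Icc.mp hj).2)
      have h0 : 0 ≤ lam * ‖ν - x j‖^2 := by positivity
      linarith
    have h2 : ∑ j ∈ Icc 1 N, (ℓ ν - ℓ (x j)) ≤ ∑ j ∈ Icc 1 N, ⟪g ν, ν - x j⟫ :=
      Finset.sum_le_sum h1
    have h3 : ∑ j ∈ Icc 1 N, ⟪g ν, ν - x j⟫ = 0 := by
      rw [← inner_sum]
      have hz : ∑ j ∈ Icc 1 N, (ν - x j) = 0 := by
        rw [Finset.sum_sub_distrib, Finset.sum_const, Nat.card_Icc]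
        simp only [Nat.add_sub_cancel]
        rw [hν, ← Nat.cast_smul_eq_nsmul ℝ, smul_inv_smul₀ (by exact_mod_cast hN.trans_lt' Nat.zero_lt_one |> ne_of_gt : (N:ℝ) ≠ 0)]
        exact sub_self _
      rw [hz, inner_zero_right]
    have h4 : ∑ j ∈ Icc 1 N, (ℓ ν - ℓ (x j))
        = (N:ℝ)*(ℓ ν) - ∑ j ∈ Icc 1 N, ℓ (x j) := by
      rw [Finset.sum_sub_distrib, Finset.sum_const, Nat.card_Icc]
      simp only [Nat.add_sub_cancel, nsmul_eq_mul]
    have h5 : ∑ j ∈ Icc 1 N, (ℓ (x j) - ℓ μstar)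
        = ∑ j ∈ Icc 1 N, ℓ (x j) - (N:ℝ)*(ℓ μstar) := by
      rw [Finset.sum_sub_distrib, Finset.sum_const, Nat.card_Icc]
      simp only [Nat.add_sub_cancel, nsmul_eq_mul]
    linarith
  -- final arithmetic
  have hL : (0:ℝ) ≤ Real.log N := Real.log_nonneg (by exact_mod_cast hN)
  have hfin : (N:ℝ)*(ℓ ν - ℓ μstar) ≤ G^2*(1+Real.log N)/lam := by
    have hc2 : G^2/(2*lam)*(1+Real.log N) + G^2/(6*lam) ≤ G^2*(1+Real.log N)/lam := by
      rw [← sub_nonneg,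
        show G^2*(1+Real.log N)/lam - (G^2/(2*lam)*(1+Real.log N) + G^2/(6*lam))
          = G^2/lam*((1+Real.log N)/2 - 1/6) by field_simp; ring]
      apply mul_nonneg (by positivity)
      linarith
    linarith
  rw [show G ^ 2 * (1 + Real.log N) / (lam * N) = (G^2*(1+Real.log N)/lam)/N from
    (div_div _ _ _).symm, le_div_iff₀ hNpos]
  linarith [hfin]
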